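/- In the setup below, the following two deterministic claims hold. (a) Let 1 ≤ j ≤ j* − 2 and suppose the coin flips are such that X_{ι(ℓ)} = Y_{ι(ℓ)} for every ℓ ≤ j and X_{ι(j+1)} = Z_{ι(j+1)}. Then max_i X̃_i = W_{j+1}, and for every arrival order π the gambler's reward is at least W_j. (b) Suppose X_{ι(ℓ)} = Y_{ι(ℓ)} for every ℓ ≤ j* − 1. Then max_i X̃_i = W_{j*}, and for every arrival order π the gambler's reward is at least W_{j*−1}. -/
import Mathlib


/-- Maximum of a function on `Fin n`, for `n > 0`. -/
noncomputable def finMax {n : ℕ} (hn : 0 < n) (f : Fin n → ℝ) : ℝ :=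
  Finset.univ.sup' (Finset.univ_nonempty_iff.mpr (Fin.pos_iff_nonempty.mp hn)) f

/-- The gambler's reward when the values `X` arrive in the order given by the
permutation `π` and the gambler accepts the first arriving value strictly
exceeding the threshold `max_i X̃ i` (reward `0` if no value does). -/
noncomputable def gamblerReward {n : ℕ} (hn : 0 < n) (π : Equiv.Perm (Fin n))
    (X Xt : Fin n → ℝ) : ℝ :=
  if h : (Finset.univ.filter (fun k => finMax hn Xt < X (π k))).Nonempty then
    X (π ((Finset.univ.filter (fun k => finMax hn Xt < X (π k))).min' h))
  else 0

lemma finMax_eq_of {n : ℕ} (hn : 0 < n) (f : Fin n → ℝ) (T : ℝ)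
    (hle : ∀ i, f i ≤ T) (i0 : Fin n) (h0 : f i0 = T) : finMax hn f = T :=
  le_antisymm (Finset.sup'_le _ _ fun i _ => hle i)
    (h0 ▸ Finset.le_sup' f (Finset.mem_univ i0))

lemma reward_ge_of {n : ℕ} (hn : 0 < n) (X Xt : Fin n → ℝ) (T b : ℝ)
    (hmax : finMax hn Xt = T) (i0 : Fin n) (h0 : T < X i0)
    (hb : ∀ i, T < X i → b ≤ X i) (π : Equiv.Perm (Fin n)) :
    b ≤ gamblerReward hn π X Xt := by
  have hne : (Finset.univ.filter (fun k => finMax hn Xt < X (π k))).Nonempty := by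
    refine ⟨π.symm i0, ?_⟩
    simp [hmax, h0]
  rw [gamblerReward, dif_pos hne]
  have hmem := Finset.min'_mem _ hne
  rw [Finset.mem_filter] at hmem
  exact hb _ (hmax ▸ hmem.2)

theorem gambler_deterministic_cases
    -- the `2n` values: `Y i > Z i ≥ 0` for each pair `i`, all distinct
    (n : ℕ) (hn : 0 < n) (Y Z : Fin n → ℝ)
    (hZnonneg : ∀ i, 0 ≤ Z i) (hYZ : ∀ i, Z i < Y i)
    (hdistinct : Function.Injective (Sum.elim Y Z))
    -- `W 1 > W 2 > … > W (2n)` is the decreasing relabeling of the `2n` values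
    (W : ℕ → ℝ) (hWanti : StrictAntiOn W (Set.Icc 1 (2 * n)))
    (hWrange : (Finset.Icc 1 (2 * n)).image W
      = Finset.univ.image Y ∪ Finset.univ.image Z)
    -- `ι j` is the index of the pair containing `W j`
    (ι : ℕ → Fin n)
    (hι : ∀ j ∈ Finset.Icc 1 (2 * n), W j = Y (ι j) ∨ W j = Z (ι j))
    -- `jstar` is the pivotal index: the least `j` whose pair index repeats an earlier one
    (jstar : ℕ)
    (hjstar : IsLeast {j : ℕ | j ∈ Finset.Icc 1 (2 * n)
      ∧ ∃ ℓ, 1 ≤ ℓ ∧ ℓ < j ∧ ι ℓ = ι j} jstar)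
    (C : Fin n → Bool) :
    (∀ j, 1 ≤ j → j ≤ jstar - 2 →
      (∀ ℓ, 1 ≤ ℓ → ℓ ≤ j →
        (if C (ι ℓ) then Y (ι ℓ) else Z (ι ℓ)) = Y (ι ℓ)) →
      (if C (ι (j + 1)) then Y (ι (j + 1)) else Z (ι (j + 1)))
          = Z (ι (j + 1)) →
      finMax hn (fun i => if C i then Z i else Y i) = W (j + 1)
        ∧ ∀ π : Equiv.Perm (Fin n),
            W j ≤ gamblerReward hn π (fun i => if C i then Y i else Z i)
              (fun i => if C i then Z i else Y i))
    ∧ ((∀ ℓ, 1 ≤ ℓ → ℓ ≤ jstar - 1 →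
        (if C (ι ℓ) then Y (ι ℓ) else Z (ι ℓ)) = Y (ι ℓ)) →
      finMax hn (fun i => if C i then Z i else Y i) = W jstar
        ∧ ∀ π : Equiv.Perm (Fin n),
            W (jstar - 1) ≤ gamblerReward hn π
              (fun i => if C i then Y i else Z i)
              (fun i => if C i then Z i else Y i)) := by
  -- basic injectivity consequences
  have hYinj : ∀ i k, Y i = Y k → i = k := by
    intro i k h
    have := hdistinct (a₁ := Sum.inl i) (a₂ := Sum.inl k) h
    simpa using this
  have hYneZ : ∀ i k, Y i ≠ Z k := by
    intro i k h
    have := hdistinct (a₁ := Sum.inl i) (a₂ := Sum.inr k) h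
    simp at this
  -- every Y/Z value is some W m, 1 ≤ m ≤ 2n
  have hfind : ∀ v : ℝ, v ∈ Finset.univ.image Y ∪ Finset.univ.image Z →
      ∃ m, 1 ≤ m ∧ m ≤ 2 * n ∧ W m = v := by
    intro v hv
    rw [← hWrange] at hv
    obtain ⟨m, hm, rfl⟩ := Finset.mem_image.mp hv
    rw [Finset.mem_Icc] at hm
    exact ⟨m, hm.1, hm.2, rfl⟩
  have hYmem : ∀ i, Y i ∈ Finset.univ.image Y ∪ Finset.univ.image Z := fun i =>
    Finset.mem_union_left _ (Finset.mem_image_of_mem _ (Finset.mem_univ i))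
  have hZmem : ∀ i, Z i ∈ Finset.univ.image Y ∪ Finset.univ.image Z := fun i =>
    Finset.mem_union_right _ (Finset.mem_image_of_mem _ (Finset.mem_univ i))
  -- jstar bounds
  obtain ⟨⟨hjmem, ℓ₀, hℓ₀1, hℓ₀lt, hℓ₀ι⟩, hjleast⟩ := hjstar
  rw [Finset.mem_Icc] at hjmem
  obtain ⟨hj1, hj2n⟩ := hjmem
  have hjstar2 : 2 ≤ jstar := by omega
  -- monotonicity helpers
  have hlt : ∀ a b, 1 ≤ a → b ≤ 2 * n → a < b → W b < W a := fun a b ha hb hab =>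
    hWanti ⟨ha, by omega⟩ ⟨by omega, hb⟩ hab
  have hleW : ∀ a b, 1 ≤ a → b ≤ 2 * n → a ≤ b → W b ≤ W a := by
    intro a b ha hb hab
    rcases eq_or_lt_of_le hab with rfl | h
    · exact le_refl _
    · exact (hlt a b ha hb h).le
  have hlt_of : ∀ a b, 1 ≤ b → a ≤ 2 * n → W b < W a → a < b := by
    intro a b hb ha h
    by_contra hc
    push_neg at hc
    exact absurd (hleW b a hb ha hc) (not_le.mpr h)
  -- W m = Y (ι m) for m < jstar
  have hWY : ∀ m, 1 ≤ m → m < jstar → W m = Y (ι m) := by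
    intro m hm1 hmj
    have hm2 : m ≤ 2 * n := by omega
    rcases hι m (Finset.mem_Icc.mpr ⟨hm1, hm2⟩) with h | h
    · exact h
    exfalso
    obtain ⟨ℓ, hℓ1, hℓ2, hℓW⟩ := hfind (Y (ι m)) (hYmem _)
    have hlt' : W m < W ℓ := by rw [h, hℓW]; exact hYZ _
    have hℓm : ℓ < m := hlt_of ℓ m hm1 hℓ2 hlt'
    have hιeq : ι ℓ = ι m := by
      rcases hι ℓ (Finset.mem_Icc.mpr ⟨hℓ1, hℓ2⟩) with h2 | h2
      · exact hYinj _ _ (h2.symm.trans hℓW)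
      · exact absurd (hℓW.symm.trans h2) (hYneZ _ _)
    have := hjleast ⟨Finset.mem_Icc.mpr ⟨hm1, hm2⟩, ℓ, hℓ1, hℓm, hιeq⟩
    omega
  -- W jstar = Z (ι jstar)
  have hWjstar : W jstar = Z (ι jstar) := by
    rcases hι jstar (Finset.mem_Icc.mpr ⟨hj1, hj2n⟩) with h | h
    · exfalso
      have h0 : W ℓ₀ = Y (ι ℓ₀) := hWY ℓ₀ hℓ₀1 hℓ₀lt
      have : W jstar < W ℓ₀ := hlt ℓ₀ jstar hℓ₀1 hj2n hℓ₀lt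
      rw [h0, hℓ₀ι, ← h] at this
      exact lt_irrefl _ this
    · exact h
  -- every Z k ≤ W jstar
  have hZle : ∀ k, Z k ≤ W jstar := by
    intro k
    by_contra hc
    push_neg at hc
    obtain ⟨m, hm1, hm2, hmW⟩ := hfind (Z k) (hZmem k)
    have hmj : m < jstar := hlt_of m jstar hj1 hm2 (by rw [hmW]; exact hc)
    have := hWY m hm1 hmj
    exact hYneZ (ι m) k (this.symm.trans hmW)
  -- the common core of both cases
  have main : ∀ s : ℕ, 1 ≤ s → s + 1 ≤ jstar →
      (∀ ℓ, 1 ≤ ℓ → ℓ ≤ s → C (ι ℓ) = true) →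
      (∃ i0, (if C i0 then Z i0 else Y i0) = W (s + 1)) →
      finMax hn (fun i => if C i then Z i else Y i) = W (s + 1) ∧
      ∀ π : Equiv.Perm (Fin n),
        W s ≤ gamblerReward hn π (fun i => if C i then Y i else Z i)
          (fun i => if C i then Z i else Y i) := by
    rintro s hs1 hsj hC ⟨i0, hi0⟩
    have hs2n : s + 1 ≤ 2 * n := by omega
    have hXtle : ∀ i, (if C i then Z i else Y i) ≤ W (s + 1) := by
      intro i
      by_cases hc : C i
      · simp only [hc, if_true]
        calc Z i ≤ W jstar := hZle i
          _ ≤ W (s + 1) := hleW (s + 1) jstar (by omega) hj2n hsj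
      · simp only [hc, if_false]
        obtain ⟨m, hm1, hm2, hmW⟩ := hfind (Y i) (hYmem i)
        have hms : s + 1 ≤ m := by
          by_contra hc2
          push_neg at hc2
          have hm' : m ≤ s := by omega
          have hWm : W m = Y (ι m) := hWY m hm1 (by omega)
          have hieq : i = ι m := hYinj i (ι m) (hmW.symm.trans hWm)
          rw [hieq] at hc
          exact hc (by simpa using hC m hm1 hm')
        rw [← hmW]
        exact hleW (s + 1) m (by omega) hm2 hms
    have hmax := finMax_eq_of hn _ (W (s + 1)) hXtle i0 hi0
    refine ⟨hmax, fun π => ?_⟩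
    apply reward_ge_of hn _ _ _ _ hmax (ι 1)
    · have hC1 := hC 1 le_rfl hs1
      have h1 : W 1 = Y (ι 1) := hWY 1 le_rfl (by omega)
      simp only [hC1, if_true]
      rw [← h1]
      exact hlt 1 (s + 1) le_rfl hs2n (by omega)
    · intro i hi
      have hv : ∃ m, 1 ≤ m ∧ m ≤ 2 * n ∧ W m = (if C i then Y i else Z i) := by
        by_cases hc : C i
        · simp only [hc, if_true]; exact hfind _ (hYmem i)
        · simp only [hc, if_false]; exact hfind _ (hZmem i)
      obtain ⟨m, hm1, hm2, hmW⟩ := hv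
      have hms : m ≤ s := by
        have := hlt_of m (s + 1) (by omega) hm2 (by rw [hmW]; exact hi)
        omega
      rw [← hmW]
      exact hleW m s hm1 (by omega) hms
  constructor
  · intro j hj1' hj2' hheads htail
    have hjj : j + 1 ≤ jstar := by omega
    have hC : ∀ ℓ, 1 ≤ ℓ → ℓ ≤ j → C (ι ℓ) = true := by
      intro ℓ h1 h2
      by_cases h : C (ι ℓ)
      · exact h
      · have := hheads ℓ h1 h2
        rw [if_neg h] at this
        exact absurd this (hYZ _).ne
    have hCf : C (ι (j + 1)) = false := by
      by_cases h : C (ι (j + 1))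
      · rw [if_pos h] at htail
        exact absurd htail (hYZ _).ne'
      · exact Bool.eq_false_iff.mpr h
    refine main j hj1' hjj hC ⟨ι (j + 1), ?_⟩
    rw [if_neg (by simp [hCf])]
    exact (hWY (j + 1) (by omega) (by omega)).symm
  · intro hheads
    have hC : ∀ ℓ, 1 ≤ ℓ → ℓ ≤ jstar - 1 → C (ι ℓ) = true := by
      intro ℓ h1 h2
      by_cases h : C (ι ℓ)
      · exact h
      · have := hheads ℓ h1 h2
        rw [if_neg h] at this
        exact absurd this (hYZ _).ne
    have hkey : jstar - 1 + 1 = jstar := by omega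
    have := main (jstar - 1) (by omega) (by omega) hC ⟨ι jstar, ?_⟩
    · rwa [hkey] at this
    · rw [hkey]
      have hCt : C (ι jstar) = true := by
        rw [← hℓ₀ι]
        exact hC ℓ₀ hℓ₀1 (by omega)
      rw [if_pos (by simp [hCt])]
      exact hWjstar.symm
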